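/- (Approximate midpoints in asymptotically p-uniformly smooth spaces) Let X be asymptotically p-uniformly smooth, p ∈ (1,∞). There is c > 0 such that for all x, y ∈ X, all δ > 0, and every weakly null sequence (x_n) in B_X, there exists n₀ such that for all n > n₀: u + δ^{1/p}‖v‖ x_n ∈ Mid(x, y, cδ), where u = (x+y)/2, v = (x−y)/2. -/

import Mathlib

open Filter Topology Metric Set Pointwise

noncomputable section

namespace CLG

variable {X Y : Type*}

/-- The expansion modulus `ω_f`. -/
def expansionMod [PseudoMetricSpace X] [PseudoMetricSpace Y] (f : X → Y) (t : ℝ) : ℝ :=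
  sSup {r : ℝ | ∃ x y : X, dist x y ≤ t ∧ r = dist (f x) (f y)}

/-- The compression modulus `ρ_f`. -/
def compressionMod [PseudoMetricSpace X] [PseudoMetricSpace Y] (f : X → Y) (t : ℝ) : ℝ :=
  sInf {r : ℝ | ∃ x y : X, t ≤ dist x y ∧ r = dist (f x) (f y)}

/-- `f` is a coarse map: `ω_f(t) < ∞` for every `t`. -/
def IsCoarseMap [PseudoMetricSpace X] [PseudoMetricSpace Y] (f : X → Y) : Prop :=
  ∀ t : ℝ, ∃ C : ℝ, ∀ x y : X, dist x y ≤ t → dist (f x) (f y) ≤ C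

/-- `f` is a coarse embedding: a coarse map with `ρ_f(t) → ∞`. -/
def IsCoarseEmbedding [PseudoMetricSpace X] [PseudoMetricSpace Y] (f : X → Y) : Prop :=
  IsCoarseMap f ∧ ∀ M : ℝ, ∃ t : ℝ, ∀ x y : X, t ≤ dist x y → M ≤ dist (f x) (f y)

/-- `f` is a uniform embedding: `ω_f(t) → 0` as `t → 0` and `ρ_f(t) > 0` for `t > 0`. -/
def IsUniformEmbeddingMap [PseudoMetricSpace X] [PseudoMetricSpace Y] (f : X → Y) : Prop :=
  (∀ ε > (0:ℝ), ∃ δ > (0:ℝ), ∀ x y : X, dist x y ≤ δ → dist (f x) (f y) ≤ ε) ∧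
  (∀ t > (0:ℝ), ∃ r > (0:ℝ), ∀ x y : X, t ≤ dist x y → r ≤ dist (f x) (f y))

/-- `f` is a coarse Lipschitz embedding. -/
def IsCoarseLipschitzEmbedding [PseudoMetricSpace X] [PseudoMetricSpace Y] (f : X → Y) : Prop :=
  ∃ L : ℝ, 0 < L ∧ ∀ x y : X,
    dist (f x) (f y) ≤ L * dist x y + L ∧ L⁻¹ * dist x y - L ≤ dist (f x) (f y)

def CoarseLipschitzEmbeds (X Y : Type*) [PseudoMetricSpace X] [PseudoMetricSpace Y] : Prop :=
  ∃ f : X → Y, IsCoarseLipschitzEmbedding f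

/-- The set of exponents `α > 0` admitting a coarse embedding `f : X → Y` with
`ρ_f(t) ≥ L⁻¹ t^α − L`. -/
def compressionSet (X Y : Type*) [NormedAddCommGroup X] [NormedAddCommGroup Y] : Set ℝ :=
  {α : ℝ | 0 < α ∧ ∃ f : X → Y, IsCoarseMap f ∧ ∃ L : ℝ, 0 < L ∧
    ∀ x y : X, L⁻¹ * ‖x - y‖ ^ α - L ≤ ‖f x - f y‖}

/-- The compression exponent `α_Y(X)` (note the argument order: `compressionExp X Y = α_Y(X)`).
By convention `sSup ∅ = 0`, matching `α_Y(X) = 0` when no such embedding exists. -/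
def compressionExp (X Y : Type*) [NormedAddCommGroup X] [NormedAddCommGroup Y] : ℝ :=
  sSup (compressionSet X Y)

/-- The modulus of asymptotic uniform smoothness `ρ̄_X(t)`. -/
def ausModulus (X : Type*) [NormedAddCommGroup X] [NormedSpace ℝ X] (t : ℝ) : ℝ :=
  ⨆ x : {x : X // ‖x‖ = 1},
    ⨅ E : {E : Submodule ℝ X // FiniteDimensional ℝ (X ⧸ E)},
      ⨆ h : {h : X // h ∈ E.1 ∧ ‖h‖ = 1}, (‖x.1 + t • h.1‖ - 1)

/-- The modulus of asymptotic uniform convexity `δ̄_X(t)`. -/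
def aucModulus (X : Type*) [NormedAddCommGroup X] [NormedSpace ℝ X] (t : ℝ) : ℝ :=
  ⨅ x : {x : X // ‖x‖ = 1},
    ⨆ E : {E : Submodule ℝ X // FiniteDimensional ℝ (X ⧸ E)},
      ⨅ h : {h : X // h ∈ E.1 ∧ ‖h‖ = 1}, (‖x.1 + t • h.1‖ - 1)

/-- Asymptotically uniformly smooth: `ρ̄_X(t)/t → 0` as `t → 0⁺`. -/
def AsympUniformlySmooth (X : Type*) [NormedAddCommGroup X] [NormedSpace ℝ X] : Prop :=
  Tendsto (fun t => ausModulus X t / t) (𝓝[>] (0:ℝ)) (𝓝 0)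

/-- Asymptotically `p`-uniformly smooth: `ρ̄_X(t) ≤ C t^p` on `[0,1]`. -/
def AsympPUnifSmooth (X : Type*) [NormedAddCommGroup X] [NormedSpace ℝ X] (p : ℝ) : Prop :=
  ∃ C > (0:ℝ), ∀ t ∈ Set.Icc (0:ℝ) 1, ausModulus X t ≤ C * t ^ p

/-- Asymptotically `p`-uniformly convex: `δ̄_X(t) ≥ C t^p` on `[0,1]`. -/
def AsympPUnifConvex (X : Type*) [NormedAddCommGroup X] [NormedSpace ℝ X] (p : ℝ) : Prop :=
  ∃ C > (0:ℝ), ∀ t ∈ Set.Icc (0:ℝ) 1, C * t ^ p ≤ aucModulus X t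

/-- Reflexivity of a Banach space: the canonical embedding into the double dual is onto. -/
def BanachReflexive (X : Type*) [NormedAddCommGroup X] [NormedSpace ℝ X] : Prop :=
  Function.Surjective (NormedSpace.inclusionInDoubleDual ℝ X)

/-- A weakly null sequence. -/
def WeaklyNull [NormedAddCommGroup X] [NormedSpace ℝ X] (x : ℕ → X) : Prop :=
  ∀ φ : X →L[ℝ] ℝ, Tendsto (fun n => φ (x n)) atTop (𝓝 0)

/-- A semi-normalized sequence. -/
def SemiNormalized [NormedAddCommGroup X] (x : ℕ → X) : Prop :=
  ∃ a b : ℝ, 0 < a ∧ ∀ n, a ≤ ‖x n‖ ∧ ‖x n‖ ≤ b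

/-- The Banach-Saks property. -/
def BanachSaksProp (X : Type*) [NormedAddCommGroup X] [NormedSpace ℝ X] : Prop :=
  ∀ x : ℕ → X, (∃ b : ℝ, ∀ n, ‖x n‖ ≤ b) → ∃ φ : ℕ → ℕ, StrictMono φ ∧ ∃ L : X,
    Tendsto (fun k : ℕ => (k:ℝ)⁻¹ • ∑ j ∈ Finset.range k, x (φ j)) atTop (𝓝 L)

/-- The alternating Banach-Saks property. -/
def AltBanachSaks (X : Type*) [NormedAddCommGroup X] [NormedSpace ℝ X] : Prop :=
  ∀ x : ℕ → X, (∃ b : ℝ, ∀ n, ‖x n‖ ≤ b) → ∃ φ : ℕ → ℕ, StrictMono φ ∧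
    ∃ ε : ℕ → ℝ, (∀ j, ε j = 1 ∨ ε j = -1) ∧ ∃ L : X,
      Tendsto (fun k : ℕ => (k:ℝ)⁻¹ • ∑ j ∈ Finset.range k, ε j • x (φ j)) atTop (𝓝 L)

/-- The `p`-Banach-Saks property. -/
def PBanachSaks (X : Type*) [NormedAddCommGroup X] [NormedSpace ℝ X] (p : ℝ) : Prop :=
  ∀ x : ℕ → X, SemiNormalized x → WeaklyNull x →
    ∃ φ : ℕ → ℕ, StrictMono φ ∧ ∃ c > (0:ℝ), ∀ (k : ℕ) (n : Fin k → ℕ),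
      StrictMono n → (∀ i, k ≤ n i) → ‖∑ i, x (φ (n i))‖ ≤ c * (k : ℝ) ^ (1 / p)

/-- The `p`-co-Banach-Saks property. -/
def PCoBanachSaks (X : Type*) [NormedAddCommGroup X] [NormedSpace ℝ X] (p : ℝ) : Prop :=
  ∀ x : ℕ → X, SemiNormalized x → WeaklyNull x →
    ∃ φ : ℕ → ℕ, StrictMono φ ∧ ∃ c > (0:ℝ), ∀ (k : ℕ) (n : Fin k → ℕ),
      StrictMono n → (∀ i, k ≤ n i) → c * (k : ℝ) ^ (1 / p) ≤ ‖∑ i, x (φ (n i))‖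

/-- The almost `p`-co-Banach-Saks property. -/
def AlmostPCoBanachSaks (X : Type*) [NormedAddCommGroup X] [NormedSpace ℝ X] (p : ℝ) : Prop :=
  ∀ x : ℕ → X, SemiNormalized x → WeaklyNull x →
    ∃ φ : ℕ → ℕ, StrictMono φ ∧ ∃ θ : ℕ → ℝ, (∀ j, 1 ≤ θ j) ∧
      (∀ α > (0:ℝ), Tendsto (fun j : ℕ => (j:ℝ) ^ α / θ j) atTop atTop) ∧
      ∀ (k : ℕ) (n : Fin k → ℕ), StrictMono n → (∀ i, k ≤ n i) →
        (k:ℝ) ^ (1 / p) / θ k ≤ ‖∑ i, x (φ (n i))‖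

/-- `X` contains an isomorphic copy of `ℓ₁`, witnessed by a sequence equivalent to the
unit vector basis of `ℓ₁`. -/
def ContainsL1Copy (X : Type*) [NormedAddCommGroup X] [NormedSpace ℝ X] : Prop :=
  ∃ (x : ℕ → X) (c C : ℝ), 0 < c ∧ 0 < C ∧ ∀ (k : ℕ) (a : Fin k → ℝ),
    c * (∑ i, |a i|) ≤ ‖∑ i, a i • x i.1‖ ∧ ‖∑ i, a i • x i.1‖ ≤ C * ∑ i, |a i|

/-- The set of approximate midpoints of `x` and `y` with error `δ`. -/
def Mid [PseudoMetricSpace X] (x y : X) (δ : ℝ) : Set X :=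
  {z : X | max (dist x z) (dist y z) ≤ (1 + δ) / 2 * dist x y}

/-- `Lip_s(f) = sup_{t ≥ s} ω_f(t)/t`. -/
def lipAt [PseudoMetricSpace X] [PseudoMetricSpace Y] (f : X → Y) (s : ℝ) : ℝ :=
  ⨆ t : {t : ℝ // s ≤ t}, expansionMod f t.1 / t.1

/-- `Lip_∞(f) = inf_{s > 0} Lip_s(f)`. -/
def lipInfty [PseudoMetricSpace X] [PseudoMetricSpace Y] (f : X → Y) : ℝ :=
  ⨅ s : {s : ℝ // 0 < s}, lipAt f s.1

end CLG

open CLG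

section Aux

open CLG

variable {X : Type*} [NormedAddCommGroup X] [NormedSpace ℝ X]

/-- Weakly null sequences almost live in finite-codimensional subspaces. -/
lemma weaklyNull_approx (E : Submodule ℝ X) (hE : FiniteDimensional ℝ (X ⧸ E)) (z : ℕ → X)
    (hz : CLG.WeaklyNull z) {ε : ℝ} (hε : 0 < ε) :
    ∃ n₀ : ℕ, ∀ n ≥ n₀, ∃ h ∈ E, ‖z n - h‖ < ε := by
  classical
  set F := E.topologicalClosure with hF
  haveI : IsClosed (F : Set X) := E.isClosed_topologicalClosure
  have hEF : E ≤ F := E.le_topologicalClosure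
  let φ : (X ⧸ E) →ₗ[ℝ] (X ⧸ F) :=
    Submodule.liftQ E F.mkQ (by rw [Submodule.ker_mkQ]; exact hEF)
  have hφ : Function.Surjective φ := by
    intro q
    obtain ⟨m, rfl⟩ := F.mkQ_surjective q
    exact ⟨E.mkQ m, rfl⟩
  haveI : FiniteDimensional ℝ (X ⧸ F) := Module.Finite.of_surjective φ hφ
  have hcont : Continuous (F.mkQ) := by
    apply AddMonoidHomClass.continuous_of_bound F.mkQ 1
    intro x
    simpa using Submodule.Quotient.norm_mk_le F x
  have hqz : Tendsto (fun n => F.mkQ (z n)) atTop (𝓝 0) := by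
    let b := Module.finBasis ℝ (X ⧸ F)
    have hcoord : ∀ i, Tendsto (fun n => b.equivFun (F.mkQ (z n)) i) atTop (𝓝 0) := by
      intro i
      let ψ : X →ₗ[ℝ] ℝ := (LinearMap.proj i).comp (b.equivFun.toLinearMap.comp F.mkQ)
      have hψc : Continuous ψ := by
        have h1 : Continuous b.equivFun.toLinearMap :=
          b.equivFun.toLinearMap.continuous_of_finiteDimensional
        exact (continuous_apply i).comp (h1.comp hcont)
      exact hz ⟨ψ, hψc⟩
    have h0 : Tendsto (fun n => b.equivFun (F.mkQ (z n))) atTop (𝓝 0) := by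
      rw [tendsto_pi_nhds]
      intro i
      simpa using hcoord i
    have hsc : Continuous b.equivFun.symm.toLinearMap :=
      b.equivFun.symm.toLinearMap.continuous_of_finiteDimensional
    have h2 : Tendsto (fun n => b.equivFun.symm (b.equivFun (F.mkQ (z n)))) atTop
        (𝓝 (b.equivFun.symm 0)) := (hsc.tendsto 0).comp h0
    rw [map_zero] at h2
    exact h2.congr (fun n => b.equivFun.symm_apply_apply _)
  have hnorm : Tendsto (fun n => ‖F.mkQ (z n)‖) atTop (𝓝 0) := by
    simpa using hqz.norm
  have hev : ∀ᶠ n in atTop, ‖F.mkQ (z n)‖ < ε / 3 :=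
    (hnorm.eventually (eventually_lt_nhds (by linarith : (0:ℝ) < ε/3))).mono
      (fun n h => by simpa using h)
  obtain ⟨n₀, hn₀⟩ := eventually_atTop.mp hev
  refine ⟨n₀, fun n hn => ?_⟩
  have h1 : ‖(Submodule.Quotient.mk (z n) : X ⧸ F)‖ < ε / 3 := by
    have := hn₀ n hn
    simpa [Submodule.mkQ_apply] using this
  obtain ⟨m, hm, hmlt⟩ := Submodule.Quotient.norm_mk_lt
    (Submodule.Quotient.mk (z n) : X ⧸ F) (show (0:ℝ) < ε/3 by linarith)
  have hmem : z n - m ∈ F := by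
    rw [← Submodule.Quotient.eq]
    exact hm.symm
  have hmsmall : ‖m‖ < 2 * ε / 3 := by linarith
  have hcl : (z n - m) ∈ closure (E : Set X) := by
    rw [← Submodule.topologicalClosure_coe]
    exact hmem
  obtain ⟨g, hgE, hgd⟩ := Metric.mem_closure_iff.mp hcl (ε/3) (by linarith)
  refine ⟨g, hgE, ?_⟩
  have hng : ‖z n - g‖ ≤ ‖z n - m - g‖ + ‖m‖ := by
    rw [show z n - g = (z n - m - g) + m by abel]
    exact norm_add_le _ _
  have hd : ‖z n - m - g‖ < ε/3 := by simpa [dist_eq_norm] using hgd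
  linarith

/-- Extract a good finite-codimensional subspace from the modulus bound. -/
lemma aus_extract {t M ε : ℝ} (ht0 : 0 ≤ t) (hM : CLG.ausModulus X t ≤ M) (hε : 0 < ε)
    (xh : X) (hx : ‖xh‖ = 1) :
    ∃ E : Submodule ℝ X, FiniteDimensional ℝ (X ⧸ E) ∧
      ∀ h ∈ E, ‖h‖ = 1 → ‖xh + t • h‖ - 1 ≤ M + ε := by
  classical
  haveI : Nonempty {E : Submodule ℝ X // FiniteDimensional ℝ (X ⧸ E)} :=
    ⟨⟨⊤, inferInstance⟩⟩
  set S : {E : Submodule ℝ X // FiniteDimensional ℝ (X ⧸ E)} → ℝ :=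
    fun E => ⨆ h : {h : X // h ∈ E.1 ∧ ‖h‖ = 1}, (‖xh + t • h.1‖ - 1) with hS
  have hterm : ∀ (E : {E : Submodule ℝ X // FiniteDimensional ℝ (X ⧸ E)})
      (h : {h : X // h ∈ E.1 ∧ ‖h‖ = 1}), ‖xh + t • h.1‖ - 1 ≤ t := by
    rintro E ⟨h, hh, hh1⟩
    have := norm_add_le xh (t • h)
    rw [hx, norm_smul, hh1] at this
    simp only [Real.norm_eq_abs, abs_of_nonneg ht0] at this
    simp only []
    linarith
  have hbddh : ∀ (E : {E : Submodule ℝ X // FiniteDimensional ℝ (X ⧸ E)}), BddAbove (Set.range fun h : {h : X // h ∈ E.1 ∧ ‖h‖ = 1} =>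
      (‖xh + t • h.1‖ - 1)) := by
    intro E
    exact ⟨t, by rintro r ⟨h, rfl⟩; exact hterm E h⟩
  have hSub : ∀ (E : {E : Submodule ℝ X // FiniteDimensional ℝ (X ⧸ E)}), S E ≤ t := fun E => Real.iSup_le (hterm E) ht0
  have hSlb : ∀ (E : {E : Submodule ℝ X // FiniteDimensional ℝ (X ⧸ E)}), -t ≤ S E := by
    intro E
    by_cases hne : Nonempty {h : X // h ∈ E.1 ∧ ‖h‖ = 1}
    · obtain ⟨h⟩ := hne
      have h1 : -t ≤ ‖xh + t • h.1‖ - 1 := by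
        have := norm_sub_norm_le xh (-(t • h.1))
        have h2 : ‖xh - -(t • h.1)‖ = ‖xh + t • h.1‖ := by rw [sub_neg_eq_add]
        rw [h2, hx, norm_neg, norm_smul, h.2.2] at this
        simp only [Real.norm_eq_abs, abs_of_nonneg ht0] at this
        linarith
      exact h1.trans (le_ciSup (hbddh E) h)
    · rw [hS]
      simp only [not_nonempty_iff] at hne
      beta_reduce
      rw [Real.iSup_of_isEmpty]
      linarith
  -- the inner infimum at xh is at most the aus modulus
  set g : {x : X // ‖x‖ = 1} → ℝ := fun x =>
    ⨅ E : {E : Submodule ℝ X // FiniteDimensional ℝ (X ⧸ E)},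
      ⨆ h : {h : X // h ∈ E.1 ∧ ‖h‖ = 1}, (‖x.1 + t • h.1‖ - 1) with hg
  have hgle : g ⟨xh, hx⟩ ≤ CLG.ausModulus X t := by
    have hbdd : BddAbove (Set.range g) := by
      refine ⟨t, ?_⟩
      rintro r ⟨x, rfl⟩
      have hlb' : BddBelow (Set.range fun E : {E : Submodule ℝ X //
          FiniteDimensional ℝ (X ⧸ E)} =>
          ⨆ h : {h : X // h ∈ E.1 ∧ ‖h‖ = 1}, (‖x.1 + t • h.1‖ - 1)) := by
        refine ⟨-1 - t, ?_⟩
        rintro r ⟨E, rfl⟩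
        set f : {h : X // h ∈ E.1 ∧ ‖h‖ = 1} → ℝ := fun h => ‖x.1 + t • h.1‖ - 1 with hf
        by_cases hne : Nonempty {h : X // h ∈ E.1 ∧ ‖h‖ = 1}
        · obtain ⟨h⟩ := hne
          have h1 : -1 - t ≤ f h := by
            have h3 : (0:ℝ) ≤ ‖x.1 + t • h.1‖ := norm_nonneg _
            simp only [hf]
            linarith
          have hbdd : BddAbove (Set.range f) := by
            refine ⟨‖x.1‖ + t, ?_⟩
            rintro r ⟨h', rfl⟩
            have := norm_add_le x.1 (t • h'.1)
            rw [norm_smul, h'.2.2] at this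
            simp only [Real.norm_eq_abs, abs_of_nonneg ht0] at this
            simp only [hf]
            linarith [norm_nonneg x.1]
          exact h1.trans (le_ciSup hbdd h)
        · simp only [not_nonempty_iff] at hne
          haveI := hne
          beta_reduce
          rw [show (⨆ h : {h : X // h ∈ E.1 ∧ ‖h‖ = 1}, (‖x.1 + t • h.1‖ - 1)) = 0 from
            Real.iSup_of_isEmpty _]
          linarith
      have h4 : (⨅ E : {E : Submodule ℝ X // FiniteDimensional ℝ (X ⧸ E)},
          ⨆ h : {h : X // h ∈ E.1 ∧ ‖h‖ = 1}, (‖x.1 + t • h.1‖ - 1)) ≤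
          ⨆ h : {h : X // h ∈ (⊤ : Submodule ℝ X) ∧ ‖h‖ = 1},
            (‖x.1 + t • h.1‖ - 1) := ciInf_le hlb' ⟨⊤, inferInstance⟩
      refine h4.trans ?_
      refine Real.iSup_le ?_ ht0
      rintro ⟨h, hh, hh1⟩
      have := norm_add_le x.1 (t • h)
      rw [x.2, norm_smul, hh1] at this
      simp only [Real.norm_eq_abs, abs_of_nonneg ht0] at this
      simp only []
      linarith
    exact le_ciSup hbdd ⟨xh, hx⟩
  have hlt : g ⟨xh, hx⟩ < M + ε := lt_of_le_of_lt (hgle.trans hM) (by linarith)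
  obtain ⟨E, hElt⟩ := exists_lt_of_ciInf_lt hlt
  refine ⟨E.1, E.2, fun h hh hh1 => ?_⟩
  have h5 : ‖xh + t • h‖ - 1 ≤ S E := le_ciSup (hbddh E) ⟨h, hh, hh1⟩
  exact h5.trans (le_of_lt hElt)

/-- The convexity/perturbation estimate. -/
lemma core_estimate {xh : X} (hx : ‖xh‖ = 1) {τ B r : ℝ} (hτ0 : 0 < τ) (hτ1 : τ ≤ 1)
    (hB : 0 ≤ B) (hr : 0 ≤ r) (E : Submodule ℝ X)
    (hE : ∀ h ∈ E, ‖h‖ = 1 → ‖xh + τ • h‖ ≤ 1 + B)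
    {w h : X} (hw : ‖w‖ ≤ 1) (hh : h ∈ E) (hwh : ‖w - h‖ ≤ r) :
    ‖xh + τ • w‖ ≤ 1 + B + 2 * r := by
  have step1 : ‖xh + τ • w‖ ≤ ‖xh + τ • h‖ + τ * ‖w - h‖ := by
    have hkey : xh + τ • w = (xh + τ • h) + τ • (w - h) := by module
    rw [hkey]
    refine (norm_add_le _ _).trans ?_
    rw [norm_smul, Real.norm_eq_abs, abs_of_nonneg hτ0.le]
  have step1' : τ * ‖w - h‖ ≤ r := by
    calc τ * ‖w - h‖ ≤ 1 * r := by
          apply mul_le_mul hτ1 hwh (norm_nonneg _) zero_le_one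
      _ = r := one_mul r
  have ha1 : ‖h‖ ≤ 1 + r := by
    have := norm_sub_norm_le h w
    rw [norm_sub_rev] at this
    linarith
  have step2 : ‖xh + τ • h‖ ≤ 1 + B + r := by
    by_cases ha0 : ‖h‖ = 0
    · have : h = 0 := norm_eq_zero.mp ha0
      rw [this, smul_zero, add_zero, hx]
      linarith
    · have ha : 0 < ‖h‖ := lt_of_le_of_ne (norm_nonneg _) (Ne.symm ha0)
      set a := ‖h‖ with haa
      set h' : X := a⁻¹ • h with hh'
      have hane : a ≠ 0 := ne_of_gt ha
      have hh'E : h' ∈ E := E.smul_mem _ hh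
      have hh'1 : ‖h'‖ = 1 := by
        rw [hh', norm_smul, Real.norm_eq_abs, abs_of_nonneg (inv_nonneg.mpr ha.le)]
        field_simp
        exact haa.symm
      have hb := hE h' hh'E hh'1
      have hah : a • h' = h := by rw [hh', smul_inv_smul₀ hane]
      rcases le_or_gt a 1 with hle | hgt
      · have hkey : xh + τ • h = (1 - a) • xh + a • (xh + τ • h') := by
          rw [← hah]; module
        rw [hkey]
        refine (norm_add_le _ _).trans ?_
        rw [norm_smul, norm_smul, hx, Real.norm_eq_abs, Real.norm_eq_abs,
          abs_of_nonneg (by linarith : (0:ℝ) ≤ 1 - a), abs_of_nonneg ha.le]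
        have : a * ‖xh + τ • h'‖ ≤ a * (1 + B) := by
          apply mul_le_mul_of_nonneg_left hb ha.le
        nlinarith
      · have hkey : xh + τ • h = (xh + τ • h') + ((a - 1) * τ) • h' := by
          rw [← hah]; module
        rw [hkey]
        refine (norm_add_le _ _).trans ?_
        rw [norm_smul, hh'1, Real.norm_eq_abs,
          abs_of_nonneg (by nlinarith : (0:ℝ) ≤ (a - 1) * τ), mul_one]
        nlinarith
  linarith

end Aux

/-- Approximate midpoints in asymptotically `p`-uniformly smooth spaces: for a weakly
null sequence `(x_n)` in the unit ball, `u + δ^{1/p}‖v‖ x_n` is eventually a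
`cδ`-approximate midpoint of `x` and `y`. -/
theorem mem_mid_of_asympPUnifSmooth
    {X : Type*} [NormedAddCommGroup X] [NormedSpace ℝ X] [CompleteSpace X]
    (p : ℝ) (hp : 1 < p) (hX : CLG.AsympPUnifSmooth X p) :
    ∃ c > (0:ℝ), ∀ (x y : X) (δ : ℝ), 0 < δ → ∀ z : ℕ → X,
      (∀ n, ‖z n‖ ≤ 1) → CLG.WeaklyNull z →
      ∃ n₀ : ℕ, ∀ n > n₀,
        (2:ℝ)⁻¹ • (x + y) + (δ ^ (1/p) * ‖(2:ℝ)⁻¹ • (x - y)‖) • z n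
          ∈ CLG.Mid x y (c * δ) := by
  classical
  obtain ⟨C, hC, hCb⟩ := hX
  refine ⟨3 * C + 1, by linarith, ?_⟩
  intro x y δ hδ z hz1 hzw
  set c : ℝ := 3 * C + 1 with hc
  set v : X := (2:ℝ)⁻¹ • (x - y) with hv
  set τ : ℝ := δ ^ (1/p) with hτdef
  have hτ0 : 0 < τ := Real.rpow_pos_of_pos hδ _
  have hcδ : 0 < c * δ := by positivity
  clear_value c v τ
  -- the key eventual norm estimates
  have key : ∃ n₀ : ℕ, ∀ n > n₀,
      ‖v - (τ * ‖v‖) • z n‖ ≤ (1 + c * δ) * ‖v‖ ∧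
      ‖v + (τ * ‖v‖) • z n‖ ≤ (1 + c * δ) * ‖v‖ := by
    by_cases hv0 : ‖v‖ = 0
    · refine ⟨0, fun n _ => ?_⟩
      constructor
      · rw [hv0, mul_zero, zero_smul, sub_zero, hv0, mul_zero]
      · rw [hv0, mul_zero, zero_smul, add_zero, hv0, mul_zero]
    · by_cases hδ1 : 1 ≤ δ
      · -- trivial estimate for large δ
        have hτδ : τ ≤ c * δ := by
          have h1p : 1/p ≤ 1 := by
            rw [div_le_one (by linarith : (0:ℝ) < p)]; linarith
          have h2 : δ ^ (1/p) ≤ δ ^ (1:ℝ) := Real.rpow_le_rpow_of_exponent_le hδ1 h1p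
          rw [Real.rpow_one] at h2
          rw [hτdef]
          nlinarith
        have htriv : ∀ w : X, ‖w‖ ≤ 1 → ‖v + (τ * ‖v‖) • w‖ ≤ (1 + c * δ) * ‖v‖ := by
          intro w hw
          have h1 : ‖v + (τ * ‖v‖) • w‖ ≤ ‖v‖ + (τ * ‖v‖) * ‖w‖ := by
            refine (norm_add_le _ _).trans ?_
            rw [norm_smul, Real.norm_eq_abs,
              abs_of_nonneg (by positivity : (0:ℝ) ≤ τ * ‖v‖)]
          have h2 : (τ * ‖v‖) * ‖w‖ ≤ τ * ‖v‖ :=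
            mul_le_of_le_one_right (by positivity) hw
          nlinarith [norm_nonneg v]
        refine ⟨0, fun n _ => ⟨?_, htriv (z n) (hz1 n)⟩⟩
        have := htriv (-(z n)) (by rw [norm_neg]; exact hz1 n)
        have heq : v - (τ * ‖v‖) • z n = v + (τ * ‖v‖) • (-(z n)) := by module
        rw [heq]
        exact this
      · -- main case : δ < 1
        push_neg at hδ1
        have hτ1 : τ ≤ 1 := by
          rw [hτdef]; exact Real.rpow_le_one hδ.le hδ1.le (by positivity)
        have hτp : τ ^ p = δ := by
          rw [hτdef, ← Real.rpow_mul hδ.le, one_div_mul_cancel (by linarith : p ≠ 0),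
            Real.rpow_one]
        have hmod : CLG.ausModulus X τ ≤ C * δ := by
          have := hCb τ ⟨hτ0.le, hτ1⟩
          rwa [hτp] at this
        have hvne : v ≠ 0 := by
          intro hcon; exact hv0 (by rw [hcon, norm_zero])
        set xh : X := ‖v‖⁻¹ • v with hxhdef
        have hxh : ‖xh‖ = 1 := norm_smul_inv_norm hvne
        clear_value xh
        obtain ⟨E, hEfd, hEb⟩ := aus_extract hτ0.le hmod
          (show (0:ℝ) < C * δ by positivity) xh hxh
        have hEb' : ∀ h ∈ E, ‖h‖ = 1 → ‖xh + τ • h‖ ≤ 1 + 2 * (C * δ) := by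
          intro h hh h1
          have := hEb h hh h1
          linarith
        obtain ⟨n₀, hn₀⟩ := weaklyNull_approx E hEfd z hzw
          (show (0:ℝ) < C * δ / 2 by positivity)
        refine ⟨n₀, fun n hn => ?_⟩
        obtain ⟨h, hhE, hhr⟩ := hn₀ n (le_of_lt hn)
        have hB0 : (0:ℝ) ≤ 2 * (C * δ) := by positivity
        have hr0 : (0:ℝ) ≤ C * δ / 2 := by positivity
        have b1 : ‖xh + τ • z n‖ ≤ 1 + 2 * (C * δ) + 2 * (C * δ / 2) :=
          core_estimate hxh hτ0 hτ1 hB0 hr0 E hEb' (hz1 n) hhE hhr.le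
        have b2 : ‖xh + τ • (-(z n))‖ ≤ 1 + 2 * (C * δ) + 2 * (C * δ / 2) := by
          refine core_estimate hxh hτ0 hτ1 hB0 hr0 E hEb' (w := -(z n)) (h := -h)
            (by rw [norm_neg]; exact hz1 n) (E.neg_mem hhE) ?_
          rw [show -(z n) - -h = -(z n - h) by abel, norm_neg]
          exact hhr.le
        have hscale : ∀ w : X, v + (τ * ‖v‖) • w = ‖v‖ • (xh + τ • w) := by
          intro w
          rw [smul_add, hxhdef, smul_inv_smul₀ hv0, smul_smul, mul_comm ‖v‖ τ]
        have hnv : (0:ℝ) ≤ ‖v‖ := norm_nonneg v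
        have hbound : 1 + 2 * (C * δ) + 2 * (C * δ / 2) ≤ 1 + c * δ := by
          rw [hc]; nlinarith
        constructor
        · have heq : v - (τ * ‖v‖) • z n = v + (τ * ‖v‖) • (-(z n)) := by module
          rw [heq, hscale, norm_smul, Real.norm_eq_abs, abs_of_nonneg hnv]
          nlinarith
        · rw [hscale, norm_smul, Real.norm_eq_abs, abs_of_nonneg hnv]
          nlinarith
  obtain ⟨n₀, hkey⟩ := key
  refine ⟨n₀, fun n hn => ?_⟩
  obtain ⟨h1, h2⟩ := hkey n hn
  simp only [CLG.Mid, Set.mem_setOf_eq]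
  have hxw : x - ((2:ℝ)⁻¹ • (x + y) + (τ * ‖v‖) • z n) = v - (τ * ‖v‖) • z n := by
    rw [hv]; module
  have hyw : y - ((2:ℝ)⁻¹ • (x + y) + (τ * ‖v‖) • z n) = -(v + (τ * ‖v‖) • z n) := by
    rw [hv]; module
  have hdxy : dist x y = 2 * ‖v‖ := by
    rw [dist_eq_norm, show x - y = (2:ℝ) • v by rw [hv]; module, norm_smul]
    simp
  rw [dist_eq_norm, dist_eq_norm, hxw, hyw, norm_neg, hdxy,
    show (1 + c * δ) / 2 * (2 * ‖v‖) = (1 + c * δ) * ‖v‖ by ring]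
  exact max_le h1 h2
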